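/- Let u and v be two probability mass functions on a finite set and let any estimator be a measurable map ŝ from samples to the set of probability vectors. Then inf_{ŝ} max_{s ∈ {u,v}} E_s‖s − ŝ‖² ≥ (‖u − v‖²/4)·(1 − sqrt(K(P_u, P_v)/2)), where K denotes the Kullback–Leibler divergence between the sampling distributions. -/

import Mathlib

open Real Set Finset

/-- auxiliary function for artanh bound -/
private lemma g_hasDeriv {t : ℝ} (ht : 0 < t) :
    HasDerivAt (fun t : ℝ => Real.log t - 2*(t-1)/(t+1)) ((t-1)^2/(t*(t+1)^2)) t := by
  have h1 := Real.hasDerivAt_log ht.ne'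
  have h2 : HasDerivAt (fun t : ℝ => 2*(t-1)) 2 t := by
    simpa using ((hasDerivAt_id t).sub_const 1).const_mul (2:ℝ)
  have h3 : HasDerivAt (fun t : ℝ => t+1) 1 t := by
    simpa using (hasDerivAt_id t).add_const (1:ℝ)
  have h4 := h2.div h3 (by positivity)
  refine (h1.sub h4).congr_deriv ?_
  field_simp
  ring

private lemma g_mono : MonotoneOn (fun t : ℝ => Real.log t - 2*(t-1)/(t+1)) (Set.Ioi 0) := by
  apply monotoneOn_of_deriv_nonneg (convex_Ioi 0)
  · exact fun x hx => (g_hasDeriv hx).continuousAt.continuousWithinAt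
  · intro x hx
    rw [interior_Ioi] at hx
    exact (g_hasDeriv hx).differentiableAt.differentiableWithinAt
  · intro x hx
    rw [interior_Ioi] at hx
    have hx' : (0:ℝ) < x := hx
    rw [(g_hasDeriv hx').deriv]
    positivity

private lemma log_ge_artanh {t : ℝ} (ht : 1 ≤ t) : 2*(t-1)/(t+1) ≤ Real.log t := by
  have := g_mono (Set.mem_Ioi.2 one_pos) (Set.mem_Ioi.2 (lt_of_lt_of_le one_pos ht)) ht
  simp only [Real.log_one] at this
  norm_num at this
  linarith

private lemma log_le_artanh {t : ℝ} (ht0 : 0 < t) (ht : t ≤ 1) : Real.log t ≤ 2*(t-1)/(t+1) := by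
  have := g_mono (Set.mem_Ioi.2 ht0) (Set.mem_Ioi.2 one_pos) ht
  simp only [Real.log_one] at this
  norm_num at this
  linarith

private noncomputable def F (t : ℝ) : ℝ := t * Real.log t - t + 1 - 3*(t-1)^2/(2*(t+2))

private lemma F_hasDeriv {t : ℝ} (ht : 0 < t) :
    HasDerivAt F (Real.log t - 3*(t-1)*(t+5)/(2*(t+2)^2)) t := by
  have h1 := Real.hasDerivAt_mul_log ht.ne'
  have h2 : HasDerivAt (fun t : ℝ => 3*(t-1)^2) (6*(t-1)) t := by
    have h := (((hasDerivAt_id t).sub_const 1).pow 2).const_mul (3:ℝ)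
    simp only [id_eq] at h
    refine h.congr_deriv ?_
    push_cast
    ring
  have h3 : HasDerivAt (fun t : ℝ => 2*(t+2)) 2 t := by
    simpa using ((hasDerivAt_id t).add_const 2).const_mul (2:ℝ)
  have h4 := h2.div h3 (by positivity)
  have h5 : HasDerivAt (fun t : ℝ => t * Real.log t - t + 1) (Real.log t) t := by
    simpa using (h1.sub (hasDerivAt_id t)).add_const (1:ℝ)
  refine (h5.sub h4).congr_deriv ?_
  field_simp
  ring

private lemma F_deriv_nonneg {t : ℝ} (ht : 1 ≤ t) :
    0 ≤ Real.log t - 3*(t-1)*(t+5)/(2*(t+2)^2) := by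
  have h1 := log_ge_artanh ht
  have h2 : 3*(t-1)*(t+5)/(2*(t+2)^2) ≤ 2*(t-1)/(t+1) := by
    rw [div_le_div_iff₀ (by positivity) (by positivity)]
    nlinarith [sq_nonneg (t-1)]
  linarith

private lemma F_deriv_nonpos {t : ℝ} (ht0 : 0 < t) (ht : t ≤ 1) :
    Real.log t - 3*(t-1)*(t+5)/(2*(t+2)^2) ≤ 0 := by
  have h1 := log_le_artanh ht0 ht
  have h2 : 2*(t-1)/(t+1) ≤ 3*(t-1)*(t+5)/(2*(t+2)^2) := by
    rw [div_le_div_iff₀ (by positivity) (by positivity)]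
    nlinarith [sq_nonneg (t-1), mul_nonneg (sq_nonneg (t-1)) (by linarith : (0:ℝ) ≤ 1-t)]
  linarith

private lemma F_one : F 1 = 0 := by simp [F]

private lemma F_nonneg {t : ℝ} (ht : 0 < t) : 0 ≤ F t := by
  rcases le_total 1 t with h | h
  · have hmono : MonotoneOn F (Set.Ici 1) := by
      apply monotoneOn_of_deriv_nonneg (convex_Ici 1)
      · exact fun x hx => (F_hasDeriv (lt_of_lt_of_le one_pos hx)).continuousAt.continuousWithinAt
      · intro x hx
        rw [interior_Ici] at hx
        exact (F_hasDeriv (lt_trans one_pos hx)).differentiableAt.differentiableWithinAt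
      · intro x hx
        rw [interior_Ici] at hx
        rw [(F_hasDeriv (lt_trans one_pos hx)).deriv]
        exact F_deriv_nonneg hx.le
    have := hmono (Set.mem_Ici.2 le_rfl) (Set.mem_Ici.2 h) h
    rwa [F_one] at this
  · have hanti : AntitoneOn F (Set.Ioc 0 1) := by
      apply antitoneOn_of_deriv_nonpos (convex_Ioc 0 1)
      · exact fun x hx => (F_hasDeriv hx.1).continuousAt.continuousWithinAt
      · intro x hx
        rw [interior_Ioc] at hx
        exact (F_hasDeriv hx.1).differentiableAt.differentiableWithinAt
      · intro x hx
        rw [interior_Ioc] at hx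
        rw [(F_hasDeriv hx.1).deriv]
        exact F_deriv_nonpos hx.1 hx.2.le
    have := hanti (Set.mem_Ioc.2 ⟨ht, h⟩) (Set.mem_Ioc.2 ⟨one_pos, le_rfl⟩) h
    rwa [F_one] at this

/-- pointwise Pinsker-type bound -/
private lemma pointwise_bound {x y : ℝ} (hx : 0 ≤ x) (hy : 0 < y) :
    3*(x-y)^2/(2*(x+2*y)) ≤ x * Real.log (x/y) - x + y := by
  rcases hx.eq_or_lt' with h | h
  · subst h
    have h1 : 3*((0:ℝ)-y)^2/(2*(0+2*y)) = 3*y/4 := by field_simp; ring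
    rw [h1]
    simp only [zero_mul, zero_sub, zero_add]
    linarith
  · have hF := F_nonneg (t := x/y) (by positivity)
    have key : y * F (x/y) = (x * Real.log (x/y) - x + y) - 3*(x-y)^2/(2*(x+2*y)) := by
      unfold F
      have hxy : x + 2*y ≠ 0 := by positivity
      field_simp
    nlinarith [mul_nonneg hy.le hF]

private lemma pinsker_sum {Ω : Type*} [Fintype Ω] (p q : Ω → ℝ)
    (hp0 : ∀ ω, 0 ≤ p ω) (hq0 : ∀ ω, 0 ≤ q ω)
    (hpsum : ∑ ω, p ω = 1) (hqsum : ∑ ω, q ω = 1)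
    (hac : ∀ ω, q ω = 0 → p ω = 0) :
    (∑ ω, |p ω - q ω|) ^ 2 ≤ 2 * ∑ ω, p ω * Real.log (p ω / q ω) := by
  classical
  set w : Ω → ℝ := fun ω => 2*(p ω + 2*q ω)/3 with hw
  set T : Finset Ω := Finset.univ.filter (fun ω => 0 < q ω) with hT
  have hqT : ∀ ω, ω ∉ T → q ω = 0 := by
    intro ω hω
    by_contra hq
    exact hω (Finset.mem_filter.2 ⟨Finset.mem_univ ω, (hq0 ω).lt_of_ne (Ne.symm hq)⟩)
  have hpT : ∀ ω, ω ∉ T → p ω = 0 := fun ω hω => hac ω (hqT ω hω)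
  have hwT : ∀ ω ∈ T, 0 < w ω := by
    intro ω hω
    have := (Finset.mem_filter.1 hω).2
    have := hp0 ω
    simp only [hw]
    positivity
  -- rewrite sums over T
  have hS : ∑ ω, |p ω - q ω| = ∑ ω ∈ T, |p ω - q ω| := by
    rw [eq_comm]
    apply Finset.sum_subset (Finset.subset_univ T)
    intro x _ hx
    rw [hpT x hx, hqT x hx]; simp
  -- K rewritten
  have hKeq : ∑ ω, p ω * Real.log (p ω / q ω)
      = ∑ ω ∈ T, (p ω * Real.log (p ω / q ω) - p ω + q ω) := by
    have h1 : ∑ ω ∈ T, (p ω * Real.log (p ω / q ω) - p ω + q ω)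
        = ∑ ω, (p ω * Real.log (p ω / q ω) - p ω + q ω) := by
      apply Finset.sum_subset (Finset.subset_univ T)
      intro x _ hx
      rw [hpT x hx, hqT x hx]; simp
    rw [h1, Finset.sum_add_distrib, Finset.sum_sub_distrib, hpsum, hqsum]
    ring
  -- Sedrakyan
  have hCS := Finset.sq_sum_div_le_sum_sq_div T (fun ω => |p ω - q ω|) hwT
  have hwsum : ∑ ω ∈ T, w ω ≤ 2 := by
    have h2 : ∑ ω ∈ T, w ω ≤ ∑ ω, w ω := by
      apply Finset.sum_le_sum_of_subset_of_nonneg (Finset.subset_univ T)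
      intro x _ _
      have := hp0 x; have := hq0 x
      simp only [hw]; positivity
    have h3 : ∑ ω, w ω = 2 := by
      simp only [hw]
      rw [← Finset.sum_div]
      have h4 : ∑ i, 2*(p i + 2*q i) = 2*((∑ i, p i) + 2*∑ i, q i) := by
        rw [← Finset.mul_sum, Finset.sum_add_distrib, ← Finset.mul_sum]
      rw [h4, hpsum, hqsum]; norm_num
    linarith
  have hterm : ∀ ω ∈ T, |p ω - q ω| ^ 2 / w ω
      ≤ p ω * Real.log (p ω / q ω) - p ω + q ω := by
    intro ω hω
    have hq : 0 < q ω := (Finset.mem_filter.1 hω).2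
    have hp := hp0 ω
    have heq : |p ω - q ω| ^ 2 / w ω = 3*(p ω - q ω)^2/(2*(p ω + 2*q ω)) := by
      rw [sq_abs, hw]
      rw [div_div_eq_mul_div]
      ring_nf
    rw [heq]
    exact pointwise_bound hp hq
  have hTsum : ∑ ω ∈ T, |p ω - q ω| ^ 2 / w ω
      ≤ ∑ ω ∈ T, (p ω * Real.log (p ω / q ω) - p ω + q ω) :=
    Finset.sum_le_sum hterm
  -- T sum of w positive
  have hTwpos : 0 < ∑ ω ∈ T, w ω := by
    obtain ⟨ω0, hω0⟩ : ∃ ω, 0 < q ω := by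
      by_contra hcon
      push_neg at hcon
      have : ∀ ω, q ω = 0 := fun ω => le_antisymm (hcon ω) (hq0 ω)
      simp [this] at hqsum
    refine Finset.sum_pos' (fun i hi => (hwT i hi).le) ⟨ω0, ?_, ?_⟩
    · exact Finset.mem_filter.2 ⟨Finset.mem_univ _, hω0⟩
    · exact hwT ω0 (Finset.mem_filter.2 ⟨Finset.mem_univ _, hω0⟩)
  rw [hS, hKeq]
  rw [div_le_iff₀ hTwpos] at hCS
  calc (∑ ω ∈ T, |p ω - q ω|) ^ 2
      ≤ (∑ ω ∈ T, |p ω - q ω| ^ 2 / w ω) * (∑ ω ∈ T, w ω) := hCS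
    _ ≤ (∑ ω ∈ T, (p ω * Real.log (p ω / q ω) - p ω + q ω)) * 2 := by
        apply mul_le_mul hTsum hwsum hTwpos.le
        exact le_trans (Finset.sum_nonneg fun i hi => div_nonneg (sq_nonneg _) (hwT i hi).le) hTsum
    _ = 2 * ∑ ω ∈ T, (p ω * Real.log (p ω / q ω) - p ω + q ω) := by ring


/-- Two-point lower bound: for any estimator `ŝ` from a finite sample space `Ω`
(with sampling pmfs `p = P_u`, `q = P_v`), the maximum over `s ∈ {u, v}` of
`E_s ‖s - ŝ‖²` is at least `(‖u - v‖²/4)(1 - √(K(P_u, P_v)/2))`. -/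
theorem stmt_4 {Ω : Type*} [Fintype Ω] {r : ℕ} (p q : Ω → ℝ)
    (hp0 : ∀ ω, 0 ≤ p ω) (hq0 : ∀ ω, 0 ≤ q ω)
    (hpsum : ∑ ω, p ω = 1) (hqsum : ∑ ω, q ω = 1)
    (hac : ∀ ω, q ω = 0 → p ω = 0)
    (u v : Fin r → ℝ) (shat : Ω → Fin r → ℝ) :
    (∑ j, (u j - v j) ^ 2) / 4 *
        (1 - Real.sqrt ((∑ ω, p ω * Real.log (p ω / q ω)) / 2)) ≤
      max (∑ ω, p ω * ∑ j, (u j - shat ω j) ^ 2)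
          (∑ ω, q ω * ∑ j, (v j - shat ω j) ^ 2) := by
  classical
  set D := ∑ j, (u j - v j) ^ 2 with hD
  set K := ∑ ω, p ω * Real.log (p ω / q ω) with hKdef
  set A := ∑ ω, p ω * ∑ j, (u j - shat ω j) ^ 2 with hA
  set B := ∑ ω, q ω * ∑ j, (v j - shat ω j) ^ 2 with hB
  have hD0 : 0 ≤ D := Finset.sum_nonneg fun j _ => sq_nonneg _
  have hA0 : 0 ≤ A := Finset.sum_nonneg fun ω _ =>
    mul_nonneg (hp0 ω) (Finset.sum_nonneg fun j _ => sq_nonneg _)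
  have hB0 : 0 ≤ B := Finset.sum_nonneg fun ω _ =>
    mul_nonneg (hq0 ω) (Finset.sum_nonneg fun j _ => sq_nonneg _)
  have hM0 : 0 ≤ max A B := le_trans hA0 (le_max_left A B)
  rcases le_or_gt (1 - Real.sqrt (K / 2)) 0 with hneg | hpos
  · calc D / 4 * (1 - Real.sqrt (K / 2)) ≤ 0 :=
          mul_nonpos_of_nonneg_of_nonpos (by positivity) hneg
      _ ≤ max A B := hM0
  · have hS := pinsker_sum p q hp0 hq0 hpsum hqsum hac
    set S := ∑ ω, |p ω - q ω| with hSdef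
    have hS0 : 0 ≤ S := Finset.sum_nonneg fun ω _ => abs_nonneg _
    have hTV : S / 2 ≤ Real.sqrt (K / 2) := by
      apply Real.le_sqrt_of_sq_le
      rw [div_pow]
      rw [← hKdef] at hS
      linarith
    -- pointwise estimator bound
    have key : ∀ ω, D / 2 * min (p ω) (q ω) ≤
        p ω * (∑ j, (u j - shat ω j) ^ 2) + q ω * (∑ j, (v j - shat ω j) ^ 2) := by
      intro ω
      set f := ∑ j, (u j - shat ω j) ^ 2 with hf
      set g := ∑ j, (v j - shat ω j) ^ 2 with hg
      have hf0 : 0 ≤ f := Finset.sum_nonneg fun j _ => sq_nonneg _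
      have hg0 : 0 ≤ g := Finset.sum_nonneg fun j _ => sq_nonneg _
      have hDfg : D ≤ 2 * (f + g) := by
        have h1 : ∀ j ∈ Finset.univ, (u j - v j) ^ 2 ≤
            2 * ((u j - shat ω j) ^ 2 + (v j - shat ω j) ^ 2) := by
          intro j _
          nlinarith [sq_nonneg (u j + v j - 2 * shat ω j)]
        have h2 := Finset.sum_le_sum h1
        have h3 : ∑ j, 2 * ((u j - shat ω j) ^ 2 + (v j - shat ω j) ^ 2)
            = 2 * (f + g) := by
          rw [← Finset.mul_sum, Finset.sum_add_distrib]
        rw [h3] at h2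
        exact h2
      have hm0 : 0 ≤ min (p ω) (q ω) := le_min (hp0 ω) (hq0 ω)
      have h4 : min (p ω) (q ω) * f ≤ p ω * f :=
        mul_le_mul_of_nonneg_right (min_le_left _ _) hf0
      have h5 : min (p ω) (q ω) * g ≤ q ω * g :=
        mul_le_mul_of_nonneg_right (min_le_right _ _) hg0
      have h6 : min (p ω) (q ω) * (D / 2) ≤ min (p ω) (q ω) * (f + g) :=
        mul_le_mul_of_nonneg_left (by linarith) hm0
      nlinarith
    have hsum : D / 2 * (∑ ω, min (p ω) (q ω)) ≤ A + B := by
      rw [Finset.mul_sum]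
      calc ∑ ω, D / 2 * min (p ω) (q ω)
          ≤ ∑ ω, (p ω * (∑ j, (u j - shat ω j) ^ 2) +
              q ω * (∑ j, (v j - shat ω j) ^ 2)) :=
            Finset.sum_le_sum fun ω _ => key ω
        _ = A + B := by rw [Finset.sum_add_distrib]
    have hmin : ∑ ω, min (p ω) (q ω) = 1 - S / 2 := by
      have h1 : ∀ ω, min (p ω) (q ω) = (p ω + q ω - |p ω - q ω|) / 2 := by
        intro ω
        rcases le_total (p ω) (q ω) with h | h
        · rw [min_eq_left h, abs_of_nonpos (by linarith)]; ring
        · rw [min_eq_right h, abs_of_nonneg (by linarith)]; ring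
      rw [Finset.sum_congr rfl fun ω _ => h1 ω, ← Finset.sum_div,
        Finset.sum_sub_distrib, Finset.sum_add_distrib, hpsum, hqsum, ← hSdef]
      ring
    have h7 : 1 - Real.sqrt (K / 2) ≤ ∑ ω, min (p ω) (q ω) := by
      rw [hmin]; linarith
    have h8 : D / 2 * (1 - Real.sqrt (K / 2)) ≤ D / 2 * ∑ ω, min (p ω) (q ω) :=
      mul_le_mul_of_nonneg_left h7 (by positivity)
    have h9 : A ≤ max A B := le_max_left A B
    have h10 : B ≤ max A B := le_max_right A B
    have h11 : D / 4 * (1 - Real.sqrt (K / 2))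
        = D / 2 * (1 - Real.sqrt (K / 2)) / 2 := by ring
    rw [h11]
    linarith
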